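/- arXiv:1306.0485 — 6 statements merged into one kernel-verified Lean document; each statement's English description precedes it below -/
import Mathlib

section
/- Let K be a field and r, s ∈ K× such that the only pair (p,q) ∈ ℤ² with r^p = s^q is (0,0). Let D = K[ρ^{±1}, σ^{±1}} be the Laurent polynomial ring in two variables and let φ be the K-algebra automorphism of D with φ(ρ) = r^{-1}ρ and φ(σ) = s^{-1}σ. Then the only φ-invariant ideals of D are 0 and D. -/
/-- The Laurent polynomial algebra `K[ρ^{±1}, σ^{±1}]` in two variables. -/
abbrev LaurentTwo (K : Type*) [Field K] : Type _ := AddMonoidAlgebra K (ℤ × ℤ)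

/-- The generator ρ. -/
noncomputable def Lρ (K : Type*) [Field K] : LaurentTwo K := AddMonoidAlgebra.single (1, 0) 1

/-- The generator σ. -/
noncomputable def Lσ (K : Type*) [Field K] : LaurentTwo K := AddMonoidAlgebra.single (0, 1) 1

open AddMonoidAlgebra in
lemma phi_single {K : Type*} [Field K] (r s : K) (hr : r ≠ 0) (hs : s ≠ 0)
    (φ : LaurentTwo K ≃ₐ[K] LaurentTwo K)
    (hφρ : φ (Lρ K) = r⁻¹ • Lρ K) (hφσ : φ (Lσ K) = s⁻¹ • Lσ K)
    (m n : ℤ) :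
    φ (AddMonoidAlgebra.single (m, n) 1) =
      AddMonoidAlgebra.single (m, n) (r⁻¹ ^ m * s⁻¹ ^ n) := by
  have hr' : r⁻¹ ≠ 0 := inv_ne_zero hr
  have hs' : s⁻¹ ≠ 0 := inv_ne_zero hs
  have h10 : φ (single ((1:ℤ), (0:ℤ)) (1:K)) = single (1,0) r⁻¹ := by
    rw [show (single ((1:ℤ),(0:ℤ)) (1:K) : LaurentTwo K) = Lρ K from rfl, hφρ, Lρ,
      AddMonoidAlgebra.smul_single', mul_one]
  have h01 : φ (single ((0:ℤ), (1:ℤ)) (1:K)) = single (0,1) s⁻¹ := by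
    rw [show (single ((0:ℤ),(1:ℤ)) (1:K) : LaurentTwo K) = Lσ K from rfl, hφσ, Lσ,
      AddMonoidAlgebra.smul_single', mul_one]
  have huniq : ∀ a b b' : LaurentTwo K, a * b = 1 → a * b' = 1 → b = b' := by
    intro a b b' h1 h2
    calc b = b * (a * b') := by rw [h2, mul_one]
    _ = (a * b) * b' := by ring
    _ = b' := by rw [h1, one_mul]
  have hone : (single ((0:ℤ),(0:ℤ)) (1:K) : LaurentTwo K) = 1 := rfl
  have hneg10 : φ (single ((-1:ℤ), (0:ℤ)) (1:K)) = single (-1,0) r := by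
    refine huniq (φ (single (1,0) 1)) _ _ ?_ ?_
    · rw [← map_mul, single_mul_single]
      norm_num [hone]
    · rw [h10, single_mul_single]
      norm_num [inv_mul_cancel₀ hr, hone]
  have hneg01 : φ (single ((0:ℤ), (-1:ℤ)) (1:K)) = single (0,-1) s := by
    refine huniq (φ (single (0,1) 1)) _ _ ?_ ?_
    · rw [← map_mul, single_mul_single]
      norm_num [hone]
    · rw [h01, single_mul_single]
      norm_num [inv_mul_cancel₀ hs, hone]
  have hm : ∀ m : ℤ, φ (single ((m:ℤ), (0:ℤ)) (1:K)) = single (m,0) (r⁻¹ ^ m) := by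
    intro m
    induction m using Int.induction_on with
    | zero => norm_num; exact map_one φ
    | succ k ih =>
        have h1 : (single ((k+1:ℤ), (0:ℤ)) (1:K)) = single ((k:ℤ),(0:ℤ)) 1 * single (1,0) 1 := by
          rw [single_mul_single]; norm_num
        rw [h1, map_mul, ih, h10, single_mul_single, zpow_add₀ hr']
        norm_num
    | pred k ih =>
        have h1 : (single ((-(k:ℤ) + -1:ℤ), (0:ℤ)) (1:K)) = single ((-k:ℤ),(0:ℤ)) 1 * single (-1,0) 1 := by
          rw [single_mul_single]; norm_num
        have h2 : (-(k:ℤ)) - 1 = -k + -1 := by ring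
        rw [h2, h1, map_mul, ih, hneg10, single_mul_single, zpow_add₀ hr']
        norm_num
  have hn : ∀ n : ℤ, φ (single ((0:ℤ), (n:ℤ)) (1:K)) = single (0,n) (s⁻¹ ^ n) := by
    intro n
    induction n using Int.induction_on with
    | zero => norm_num; exact map_one φ
    | succ k ih =>
        have h1 : (single ((0:ℤ), (k+1:ℤ)) (1:K)) = single ((0:ℤ),(k:ℤ)) 1 * single (0,1) 1 := by
          rw [single_mul_single]; norm_num
        rw [h1, map_mul, ih, h01, single_mul_single, zpow_add₀ hs']
        norm_num
    | pred k ih =>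
        have h1 : (single ((0:ℤ), (-(k:ℤ) + -1:ℤ)) (1:K)) = single ((0:ℤ),(-k:ℤ)) 1 * single (0,-1) 1 := by
          rw [single_mul_single]; norm_num
        have h2 : (-(k:ℤ)) - 1 = -k + -1 := by ring
        rw [h2, h1, map_mul, ih, hneg01, single_mul_single, zpow_add₀ hs']
        norm_num
  have h1 : (single ((m:ℤ), (n:ℤ)) (1:K)) = single ((m:ℤ),(0:ℤ)) 1 * single (0,n) 1 := by
    rw [single_mul_single]; norm_num
  rw [h1, map_mul, hm, hn, single_mul_single]
  norm_num

open AddMonoidAlgebra in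
lemma phi_coeff {K : Type*} [Field K] (r s : K) (hr : r ≠ 0) (hs : s ≠ 0)
    (φ : LaurentTwo K ≃ₐ[K] LaurentTwo K)
    (hφρ : φ (Lρ K) = r⁻¹ • Lρ K) (hφσ : φ (Lσ K) = s⁻¹ • Lσ K)
    (f : LaurentTwo K) (a : ℤ × ℤ) :
    (φ f).coeff a = r⁻¹ ^ a.1 * s⁻¹ ^ a.2 * f.coeff a := by
  induction f using AddMonoidAlgebra.induction_linear with
  | zero => simp
  | add f g hf hg =>
      rw [map_add, AddMonoidAlgebra.coeff_add, AddMonoidAlgebra.coeff_add, Finsupp.add_apply,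
        Finsupp.add_apply, hf, hg]
      ring
  | single b c =>
      have h1 : (AddMonoidAlgebra.single b c : LaurentTwo K)
          = c • AddMonoidAlgebra.single (b.1, b.2) 1 := by
        rw [AddMonoidAlgebra.smul_single', mul_one]
      rw [h1, map_smul, phi_single r s hr hs φ hφρ hφσ, AddMonoidAlgebra.coeff_smul_apply,
        AddMonoidAlgebra.coeff_smul_apply, AddMonoidAlgebra.coeff_single,
        AddMonoidAlgebra.coeff_single, Finsupp.single_apply, Finsupp.single_apply]
      by_cases hba : (b.1, b.2) = a
      · subst hba; simp; ring
      · simp [hba]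

/-- if `r^p = s^q` (for integers `p,q`) only when `(p,q) = (0,0)`, and `φ`
is the `K`-algebra automorphism of `D = K[ρ^{±1},σ^{±1}]` with `φ(ρ) = r⁻¹ρ`,
`φ(σ) = s⁻¹σ`, then the only `φ`-invariant ideals of `D` are `0` and `D`. -/
theorem stmt2 {K : Type*} [Field K] (r s : K) (hr : r ≠ 0) (hs : s ≠ 0)
    (hrs : ∀ p q : ℤ, r ^ p = s ^ q → p = 0 ∧ q = 0)
    (φ : LaurentTwo K ≃ₐ[K] LaurentTwo K)
    (hφρ : φ (Lρ K) = r⁻¹ • Lρ K) (hφσ : φ (Lσ K) = s⁻¹ • Lσ K) :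
    ∀ J : Ideal (LaurentTwo K), (∀ a ∈ J, φ a ∈ J) → J = ⊥ ∨ J = ⊤ := by
  intro J hJ
  by_cases hbot : J = ⊥
  · exact Or.inl hbot
  right
  obtain ⟨f0, hf0J, hf0⟩ := Submodule.exists_mem_ne_zero_of_ne_bot hbot
  have hex : ∃ n, ∃ f : LaurentTwo K, f ∈ J ∧ f ≠ 0 ∧ f.coeff.support.card = n :=
    ⟨_, f0, hf0J, hf0, rfl⟩
  classical
  obtain ⟨f, hfJ, hfne, hfcard⟩ := Nat.find_spec hex
  have hmin : ∀ g : LaurentTwo K, g ∈ J → g ≠ 0 → Nat.find hex ≤ g.coeff.support.card :=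
    fun g hg hg0 => Nat.find_min' hex ⟨g, hg, hg0, rfl⟩
  obtain ⟨a₀, ha₀⟩ := Finsupp.support_nonempty_iff.mpr (AddMonoidAlgebra.coeff_eq_zero.not.mpr hfne)
  set c : ℤ × ℤ → K := fun a => r⁻¹ ^ a.1 * s⁻¹ ^ a.2 with hc
  -- the element g = φ f - c a₀ • f
  set g : LaurentTwo K := φ f - c a₀ • f with hg
  have hgJ : g ∈ J := by
    refine Submodule.sub_mem J (hJ f hfJ) ?_
    have : c a₀ • f = (c a₀ • (1 : LaurentTwo K)) * f := by
      rw [smul_mul_assoc, one_mul]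
    rw [this]
    exact Ideal.mul_mem_left J _ hfJ
  have hgapp : ∀ a : ℤ × ℤ, g.coeff a = (c a - c a₀) * f.coeff a := by
    intro a
    have h1 : g.coeff a = (φ f).coeff a - (c a₀ • f).coeff a := rfl
    rw [h1, phi_coeff r s hr hs φ hφρ hφσ]
    show c a * f.coeff a - c a₀ * f.coeff a = _
    ring
  have hgsupp : g.coeff.support ⊆ f.coeff.support.erase a₀ := by
    intro a ha
    have hga : g.coeff a ≠ 0 := Finsupp.mem_support_iff.mp ha
    rw [hgapp] at hga
    have hfa : f.coeff a ≠ 0 := fun h => hga (by rw [h, mul_zero])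
    have hne : a ≠ a₀ := by
      intro h; subst h; exact hga (by ring)
    exact Finset.mem_erase.mpr ⟨hne, Finsupp.mem_support_iff.mpr hfa⟩
  have hg0 : g = 0 := by
    by_contra hgne
    have h1 := hmin g hgJ hgne
    have h2 : g.coeff.support.card ≤ (f.coeff.support.erase a₀).card := Finset.card_le_card hgsupp
    have h3 : (f.coeff.support.erase a₀).card < f.coeff.support.card := Finset.card_erase_lt_of_mem ha₀
    omega
  -- every a in supp f has c a = c a₀, hence a = a₀
  have hsupp : f.coeff.support ⊆ {a₀} := by
    intro a ha
    have hfa : f.coeff a ≠ 0 := Finsupp.mem_support_iff.mp ha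
    have hca : c a = c a₀ := by
      have : g.coeff a = 0 := by rw [hg0]; rfl
      rw [hgapp] at this
      rcases mul_eq_zero.mp this with h | h
      · exact sub_eq_zero.mp h
      · exact absurd h hfa
    have hkey : r ^ (a₀.1 - a.1) = s ^ (a.2 - a₀.2) := by
      have h' : r ^ a.1 * s ^ a.2 = r ^ a₀.1 * s ^ a₀.2 := by
        have := hca
        simp only [hc, inv_zpow] at this
        have h2 : ((r ^ a.1) * (s ^ a.2))⁻¹ = ((r ^ a₀.1) * (s ^ a₀.2))⁻¹ := by
          rw [mul_inv, mul_inv]; exact this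
        exact inv_injective h2
      rw [zpow_sub₀ hr, zpow_sub₀ hs]
      rw [div_eq_div_iff (zpow_ne_zero _ hr) (zpow_ne_zero _ hs)]
      linear_combination -h'
    obtain ⟨h1, h2⟩ := hrs _ _ hkey
    have : a = a₀ := Prod.ext (by omega) (by omega)
    simp [this]
  have hfeq : f = AddMonoidAlgebra.single a₀ (f.coeff a₀) :=
    AddMonoidAlgebra.coeff_injective (Finsupp.support_subset_singleton.mp hsupp)
  have hfa₀ : f.coeff a₀ ≠ 0 := Finsupp.mem_support_iff.mp ha₀
  rw [Ideal.eq_top_iff_one]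
  have hone : (AddMonoidAlgebra.single (-a₀) (f.coeff a₀)⁻¹ : LaurentTwo K) *
      AddMonoidAlgebra.single a₀ (f.coeff a₀) = 1 := by
    rw [AddMonoidAlgebra.single_mul_single, neg_add_cancel, inv_mul_cancel₀ hfa₀]
    rfl
  rw [← hone]
  exact Ideal.mul_mem_left J _ (hfeq ▸ hfJ)
end

section
/- Let K be a field, r, s ∈ K× with r^2 ≠ s^2 and r,s satisfying the condition that r^p = s^q for integers p,q implies p=q=0. Let D = K[ρ^{±1},σ^{±1}], φ the automorphism with φ(ρ)=r^{-1}ρ, φ(σ)=s^{-1}σ, and t = (r^2ρ^2 - s^2σ^2)/(r^2 - s^2) ∈ D. Then for every positive integer m, the ideal generated by t and φ^m(t) is all of D, i.e., tD + φ^m(t)D = D. -/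
/-- The element `t = (r²ρ² - s²σ²)/(r² - s²)`. -/
noncomputable def Lt (K : Type*) [Field K] (r s : K) : LaurentTwo K :=
  (r ^ 2 - s ^ 2)⁻¹ • (r ^ 2 • (Lρ K * Lρ K) - s ^ 2 • (Lσ K * Lσ K))

lemma pow_apply_aux {K : Type*} [Field K] (φ : LaurentTwo K ≃ₐ[K] LaurentTwo K)
    (c : K) (x : LaurentTwo K) (hx : φ x = c • x) (m : ℕ) :
    (φ ^ m : LaurentTwo K ≃ₐ[K] LaurentTwo K) x = c ^ m • x := by
  induction m with
  | zero => simp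
  | succ n ih =>
    rw [pow_succ, AlgEquiv.mul_apply, hx, map_smul, ih, smul_smul, pow_succ]
    ring_nf

/-- with `t = (r²ρ² - s²σ²)/(r² - s²)` and `φ(ρ) = r⁻¹ρ`, `φ(σ) = s⁻¹σ`,
for every positive integer `m` we have `tD + φ^m(t)D = D`. -/
theorem stmt3 {K : Type*} [Field K] (r s : K) (hr : r ≠ 0) (hs : s ≠ 0)
    (hrs2 : r ^ 2 ≠ s ^ 2) (hrs : ∀ p q : ℤ, r ^ p = s ^ q → p = 0 ∧ q = 0)
    (φ : LaurentTwo K ≃ₐ[K] LaurentTwo K)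
    (hφρ : φ (Lρ K) = r⁻¹ • Lρ K) (hφσ : φ (Lσ K) = s⁻¹ • Lσ K) :
    ∀ m : ℕ, 0 < m →
      Ideal.span {Lt K r s, (φ ^ m : LaurentTwo K ≃ₐ[K] LaurentTwo K) (Lt K r s)} = ⊤ := by
  intro m hm
  set a : K := (s⁻¹) ^ (2 * m) with ha
  set b : K := (r⁻¹) ^ (2 * m) with hb
  have hab : a ≠ b := by
    intro h
    have h' : r ^ (2 * m) = s ^ (2 * m) := by
      have := congrArg (fun x => x⁻¹) h
      simpa [ha, hb, ← inv_pow] using this.symm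
    have hz : r ^ ((2 * m : ℕ) : ℤ) = s ^ ((2 * m : ℕ) : ℤ) := by
      rw [zpow_natCast, zpow_natCast]; exact h'
    have := (hrs _ _ hz).1
    omega
  -- compute φ^m t
  have hρ : (φ ^ m : LaurentTwo K ≃ₐ[K] LaurentTwo K) (Lρ K) = (r⁻¹) ^ m • Lρ K :=
    pow_apply_aux φ _ _ hφρ m
  have hσ : (φ ^ m : LaurentTwo K ≃ₐ[K] LaurentTwo K) (Lσ K) = (s⁻¹) ^ m • Lσ K :=
    pow_apply_aux φ _ _ hφσ m
  have hφt : (φ ^ m : LaurentTwo K ≃ₐ[K] LaurentTwo K) (Lt K r s) =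
      (r ^ 2 - s ^ 2)⁻¹ • (r ^ 2 • (b • (Lρ K * Lρ K)) - s ^ 2 • (a • (Lσ K * Lσ K))) := by
    rw [Lt, map_smul, map_sub, map_smul, map_smul, map_mul, map_mul, hρ, hσ,
      smul_mul_smul_comm, smul_mul_smul_comm, ← pow_add, ← pow_add, ha, hb, two_mul]
  set c : K := (r ^ 2 - s ^ 2)⁻¹ with hc
  set e : K := c * r ^ 2 * (a - b) with he
  have hcomb : a • Lt K r s - (φ ^ m : LaurentTwo K ≃ₐ[K] LaurentTwo K) (Lt K r s)
      = e • (Lρ K * Lρ K) := by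
    rw [hφt, Lt, he]
    module
  have he0 : e ≠ 0 := by
    apply mul_ne_zero (mul_ne_zero _ (pow_ne_zero _ hr)) (sub_ne_zero.mpr hab)
    exact inv_ne_zero (sub_ne_zero.mpr hrs2)
  rw [Ideal.eq_top_iff_one]
  have h1 : e • (Lρ K * Lρ K) ∈
      Ideal.span {Lt K r s, (φ ^ m : LaurentTwo K ≃ₐ[K] LaurentTwo K) (Lt K r s)} := by
    rw [← hcomb]
    apply sub_mem
    · rw [Algebra.smul_def]
      exact Ideal.mul_mem_left _ _ (Ideal.subset_span (Set.mem_insert _ _))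
    · exact Ideal.subset_span (Set.mem_insert_iff.mpr (Or.inr rfl))
  have h2 : (AddMonoidAlgebra.single ((-2 : ℤ), (0 : ℤ)) e⁻¹ : LaurentTwo K) *
      (e • (Lρ K * Lρ K)) = 1 := by
    have hz : ((-2:ℤ),(0:ℤ)) + (((1:ℤ),(0:ℤ)) + ((1:ℤ),(0:ℤ))) = 0 := by decide
    rw [Lρ, AddMonoidAlgebra.single_mul_single, AddMonoidAlgebra.smul_single',
      AddMonoidAlgebra.single_mul_single, hz, mul_one, mul_one, inv_mul_cancel₀ he0,
      AddMonoidAlgebra.one_def]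
  rw [← h2]
  exact Ideal.mul_mem_left _ _ h1
end

section
/- Let K be a field, n ≥ 1, and r_i, s_i ∈ K× (1 ≤ i ≤ n) with r_i^2 ≠ s_i^2. On the polynomial space P(n) = K[z_1,…,z_n] with monomial basis z(k) = z_1^{k_1}⋯z_n^{k_n}, define operators for each i: ρ_i·z(k) = r_i^{k_i} z(k), σ_i·z(k) = s_i^{k_i} z(k), x_i·z(k) = z(k+ε_i), y_i·z(k) = [k_i]_i z(k−ε_i) where [m]_i = (r_i^{2m} − s_i^{2m})/(r_i^2 − s_i^2) and z(k−ε_i) = 0 if k_i = 0. Then these operators satisfy the defining relations (R1)–(R5) of the multiparameter Weyl algebra A_{r,s}(n); in particular y_i x_i − r_i^2 x_i y_i = σ_i^2 and y_i x_i − s_i^2 x_i y_i = ρ_i^2 as operators on P(n). -/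
/-- Build a linear operator on `ι →₀ K` from its values on the basis. -/
noncomputable def mkOp {K : Type*} [Field K] {ι : Type*} (f : ι → (ι →₀ K)) :
    (ι →₀ K) →ₗ[K] (ι →₀ K) :=
  Finsupp.lsum K fun k => LinearMap.toSpanSingleton K (ι →₀ K) (f k)

/-- The quantum-type integer `[m] = (r^{2m} - s^{2m})/(r² - s²)`. -/
noncomputable def qint {K : Type*} [Field K] (r s : K) (m : ℕ) : K :=
  (r ^ (2 * m) - s ^ (2 * m)) / (r ^ 2 - s ^ 2)

section ops
variable {K : Type*} [Field K] {n : ℕ}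

/-- `ρ_i z(k) = r_i^{k_i} z(k)` (with eigenvalue parameter `r`). -/
noncomputable def rhoOp (r : Fin n → K) (i : Fin n) :
    ((Fin n → ℕ) →₀ K) →ₗ[K] ((Fin n → ℕ) →₀ K) :=
  mkOp fun k => Finsupp.single k (r i ^ k i)

/-- inverse of `rhoOp`. -/
noncomputable def rhoInvOp (r : Fin n → K) (i : Fin n) :
    ((Fin n → ℕ) →₀ K) →ₗ[K] ((Fin n → ℕ) →₀ K) :=
  mkOp fun k => Finsupp.single k ((r i)⁻¹ ^ k i)

/-- `x_i z(k) = z(k + ε_i)`. -/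
noncomputable def xOp (i : Fin n) :
    ((Fin n → ℕ) →₀ K) →ₗ[K] ((Fin n → ℕ) →₀ K) :=
  mkOp fun k => Finsupp.single (Function.update k i (k i + 1)) (1 : K)

/-- `y_i z(k) = [k_i]_i z(k - ε_i)` (zero when `k_i = 0`, since `[0] = 0`). -/
noncomputable def yOp (r s : Fin n → K) (i : Fin n) :
    ((Fin n → ℕ) →₀ K) →ₗ[K] ((Fin n → ℕ) →₀ K) :=
  mkOp fun k => qint (r i) (s i) (k i) • Finsupp.single (Function.update k i (k i - 1)) (1 : K)

lemma mkOp_single {ι : Type*} (f : ι → (ι →₀ K)) (k : ι) (c : K) :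
    mkOp f (Finsupp.single k c) = c • f k := by
  simp [mkOp]

lemma opExt {f g : ((Fin n → ℕ) →₀ K) →ₗ[K] ((Fin n → ℕ) →₀ K)}
    (h : ∀ k, f (Finsupp.single k 1) = g (Finsupp.single k 1)) : f = g := by
  refine Finsupp.lhom_ext fun a b => ?_
  rw [show (Finsupp.single a b) = b • Finsupp.single a 1 by simp, map_smul, map_smul, h]

lemma rhoOp_single (r : Fin n → K) (i : Fin n) (k : Fin n → ℕ) (c : K) :
    rhoOp r i (Finsupp.single k c) = (c * r i ^ k i) • Finsupp.single k 1 := by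
  simp [rhoOp, mkOp_single, Finsupp.smul_single, mul_comm]

lemma rhoInvOp_single (r : Fin n → K) (i : Fin n) (k : Fin n → ℕ) (c : K) :
    rhoInvOp r i (Finsupp.single k c) = (c * (r i)⁻¹ ^ k i) • Finsupp.single k 1 := by
  simp [rhoInvOp, mkOp_single, Finsupp.smul_single, mul_comm]

lemma xOp_single (i : Fin n) (k : Fin n → ℕ) (c : K) :
    xOp i (Finsupp.single k c) = c • Finsupp.single (Function.update k i (k i + 1)) 1 := by
  simp [xOp, mkOp_single]

lemma yOp_single (r s : Fin n → K) (i : Fin n) (k : Fin n → ℕ) (c : K) :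
    yOp r s i (Finsupp.single k c)
      = (c * qint (r i) (s i) (k i)) • Finsupp.single (Function.update k i (k i - 1)) 1 := by
  simp [yOp, mkOp_single, smul_smul]

lemma qint_zero (r s : K) : qint r s 0 = 0 := by simp [qint]

lemma qint_succ_r (r s : K) (h : r ^ 2 ≠ s ^ 2) (m : ℕ) :
    qint r s (m + 1) - r ^ 2 * qint r s m = s ^ (2 * m) := by
  have h' : r ^ 2 - s ^ 2 ≠ 0 := sub_ne_zero.mpr h
  simp only [qint]
  field_simp
  ring

lemma qint_succ_s (r s : K) (h : r ^ 2 ≠ s ^ 2) (m : ℕ) :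
    qint r s (m + 1) - s ^ 2 * qint r s m = r ^ (2 * m) := by
  have h' : r ^ 2 - s ^ 2 ≠ 0 := sub_ne_zero.mpr h
  simp only [qint]
  field_simp
  ring

end ops

/-- the natural operators on the polynomial space `P(n)` satisfy the
defining relations (R1)-(R5) of the multiparameter Weyl algebra `A_{r,s}(n)`. -/
theorem stmt5 {K : Type*} [Field K] (n : ℕ) (hn : 1 ≤ n)
    (r s : Fin n → K) (hr : ∀ i, r i ≠ 0) (hs : ∀ i, s i ≠ 0)
    (hrs : ∀ i, (r i) ^ 2 ≠ (s i) ^ 2) :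
    -- (R1) the ρ_i^{±1}, σ_j^{±1} commute and are mutually inverse
    (∀ i j : Fin n,
        rhoOp r i ∘ₗ rhoOp r j = rhoOp r j ∘ₗ rhoOp r i ∧
        rhoOp (K := K) r i ∘ₗ rhoOp s j = rhoOp s j ∘ₗ rhoOp r i ∧
        rhoOp (K := K) s i ∘ₗ rhoOp s j = rhoOp s j ∘ₗ rhoOp s i) ∧
    (∀ i : Fin n,
        rhoOp (K := K) r i ∘ₗ rhoInvOp r i = LinearMap.id ∧
        rhoInvOp (K := K) r i ∘ₗ rhoOp r i = LinearMap.id ∧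
        rhoOp (K := K) s i ∘ₗ rhoInvOp s i = LinearMap.id ∧
        rhoInvOp (K := K) s i ∘ₗ rhoOp s i = LinearMap.id) ∧
    -- (R2) ρ_i x_j = r_i^{δij} x_j ρ_i, ρ_i y_j = r_i^{-δij} y_j ρ_i
    (∀ i j : Fin n,
        rhoOp r i ∘ₗ xOp j = (if i = j then r i else 1) • (xOp j ∘ₗ rhoOp r i) ∧
        rhoOp r i ∘ₗ yOp r s j = (if i = j then r i else 1)⁻¹ • (yOp r s j ∘ₗ rhoOp r i)) ∧
    -- (R3) σ_i x_j = s_i^{δij} x_j σ_i, σ_i y_j = s_i^{-δij} y_j σ_i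
    (∀ i j : Fin n,
        rhoOp s i ∘ₗ xOp j = (if i = j then s i else 1) • (xOp j ∘ₗ rhoOp s i) ∧
        rhoOp s i ∘ₗ yOp r s j = (if i = j then s i else 1)⁻¹ • (yOp r s j ∘ₗ rhoOp s i)) ∧
    -- (R4)
    (∀ i j : Fin n,
        xOp (K := K) (n := n) i ∘ₗ xOp j = xOp j ∘ₗ xOp i ∧
        yOp r s i ∘ₗ yOp r s j = yOp r s j ∘ₗ yOp r s i) ∧
    (∀ i j : Fin n, i ≠ j → yOp r s i ∘ₗ xOp j = xOp j ∘ₗ yOp r s i) ∧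
    -- (R5)
    (∀ i : Fin n,
        yOp r s i ∘ₗ xOp i - (r i) ^ 2 • (xOp i ∘ₗ yOp r s i) = rhoOp s i ∘ₗ rhoOp s i ∧
        yOp r s i ∘ₗ xOp i - (s i) ^ 2 • (xOp i ∘ₗ yOp r s i) = rhoOp r i ∘ₗ rhoOp r i) := by
  refine ⟨?_, ?_, ?_, ?_, ?_, ?_, ?_⟩
  · intro i j
    refine ⟨opExt fun k => ?_, opExt fun k => ?_, opExt fun k => ?_⟩ <;>
      simp [rhoOp_single, smul_smul, mul_comm]
  · intro i
    refine ⟨opExt fun k => ?_, opExt fun k => ?_, opExt fun k => ?_, opExt fun k => ?_⟩ <;>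
      simp [rhoOp_single, rhoInvOp_single, smul_smul, ← mul_pow, hr, hs,
        inv_mul_cancel₀, mul_inv_cancel₀]
  · intro i j
    constructor
    · apply opExt; intro k
      rcases eq_or_ne i j with rfl | hij
      · simp [rhoOp_single, xOp_single, smul_smul, pow_succ, mul_comm]
      · simp [rhoOp_single, xOp_single, smul_smul, Function.update_of_ne hij, hij, mul_comm]
    · apply opExt; intro k
      rcases eq_or_ne i j with rfl | hij
      · rcases Nat.eq_zero_or_pos (k i) with h | h
        · simp [rhoOp_single, yOp_single, smul_smul, h, qint_zero]
        · obtain ⟨m, hm⟩ : ∃ m, k i = m + 1 := ⟨k i - 1, (Nat.succ_pred_eq_of_pos h).symm⟩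
          simp only [rhoOp_single, yOp_single, LinearMap.comp_apply, LinearMap.smul_apply,
            map_smul, smul_smul, one_mul, hm, Nat.add_sub_cancel, Function.update_self,
            if_pos rfl, ↓reduceIte]
          congr 1
          field_simp [hr i]
          ring
      · simp [rhoOp_single, yOp_single, smul_smul, Function.update_of_ne hij, hij, mul_comm]
  · intro i j
    constructor
    · apply opExt; intro k
      rcases eq_or_ne i j with rfl | hij
      · simp [rhoOp_single, xOp_single, smul_smul, pow_succ, mul_comm]
      · simp [rhoOp_single, xOp_single, smul_smul, Function.update_of_ne hij, hij, mul_comm]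
    · apply opExt; intro k
      rcases eq_or_ne i j with rfl | hij
      · rcases Nat.eq_zero_or_pos (k i) with h | h
        · simp [rhoOp_single, yOp_single, smul_smul, h, qint_zero]
        · obtain ⟨m, hm⟩ : ∃ m, k i = m + 1 := ⟨k i - 1, (Nat.succ_pred_eq_of_pos h).symm⟩
          simp only [rhoOp_single, yOp_single, LinearMap.comp_apply, LinearMap.smul_apply,
            map_smul, smul_smul, one_mul, hm, Nat.add_sub_cancel, Function.update_self,
            if_pos rfl, ↓reduceIte]
          congr 1
          field_simp [hs i]
          ring
      · simp [rhoOp_single, yOp_single, smul_smul, Function.update_of_ne hij, hij, mul_comm]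
  · intro i j
    constructor
    · apply opExt; intro k
      rcases eq_or_ne i j with rfl | hij
      · rfl
      · simp [xOp_single, Function.update_of_ne hij, Function.update_of_ne hij.symm,
          Function.update_comm hij]
    · apply opExt; intro k
      rcases eq_or_ne i j with rfl | hij
      · rfl
      · simp [yOp_single, smul_smul, Function.update_of_ne hij, Function.update_of_ne hij.symm,
          Function.update_comm hij, mul_comm]
  · intro i j hij
    apply opExt; intro k
    simp [yOp_single, xOp_single, smul_smul, Function.update_of_ne hij,
      Function.update_of_ne hij.symm, Function.update_comm hij, mul_comm]
  · intro i
    constructor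
    · apply opExt; intro k
      have hq := qint_succ_r (r i) (s i) (hrs i) (k i)
      simp only [LinearMap.sub_apply, LinearMap.smul_apply, LinearMap.comp_apply,
        xOp_single, yOp_single, rhoOp_single, map_smul, smul_smul, one_mul, one_smul,
        Function.update_self, Function.update_idem, Nat.add_sub_cancel,
        Function.update_eq_self]
      rcases Nat.eq_zero_or_pos (k i) with h | h
      · have hq0 : qint (r i) (s i) (k i) = 0 := by rw [h, qint_zero]
        rw [hq0]
        simp only [mul_zero, zero_smul, sub_zero]
        congr 1
        rw [h]
        simp only [pow_zero, mul_one, qint]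
        norm_num
        exact sub_ne_zero.mpr (hrs i)
      · have h1 : k i - 1 + 1 = k i := Nat.succ_pred_eq_of_pos h
        rw [h1, Function.update_eq_self, ← sub_smul]
        congr 1
        rw [show s i ^ k i * s i ^ k i = s i ^ (2 * k i) by rw [two_mul, pow_add]]
        linear_combination hq
    · apply opExt; intro k
      have hq := qint_succ_s (r i) (s i) (hrs i) (k i)
      simp only [LinearMap.sub_apply, LinearMap.smul_apply, LinearMap.comp_apply,
        xOp_single, yOp_single, rhoOp_single, map_smul, smul_smul, one_mul, one_smul,
        Function.update_self, Function.update_idem, Nat.add_sub_cancel,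
        Function.update_eq_self]
      rcases Nat.eq_zero_or_pos (k i) with h | h
      · have hq0 : qint (r i) (s i) (k i) = 0 := by rw [h, qint_zero]
        rw [hq0]
        simp only [mul_zero, zero_smul, sub_zero]
        congr 1
        rw [h]
        simp only [pow_zero, mul_one, qint]
        norm_num
        exact sub_ne_zero.mpr (hrs i)
      · have h1 : k i - 1 + 1 = k i := Nat.succ_pred_eq_of_pos h
        rw [h1, Function.update_eq_self, ← sub_smul]
        congr 1
        rw [show r i ^ k i * r i ^ k i = r i ^ (2 * k i) by rw [two_mul, pow_add]]
        linear_combination hq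
end

section
/- Under the assumptions of the polynomial action of A_{r,s}(n) on P(n) = K[z_1,…,z_n], and assuming in addition that for each i the only (p,q) ∈ ℤ² with r_i^p = s_i^q is (0,0), the module P(n) is simple: any nonzero subspace of P(n) invariant under all the operators ρ_i^{±1}, σ_i^{±1}, x_i, y_i equals P(n). -/
section aux
variable {K : Type*} [Field K] {n : ℕ}

lemma diag_apply {ι : Type*} (u : ι → K) (v : ι →₀ K) (m : ι) :
    mkOp (fun k => Finsupp.single k (u k)) v m = u m * v m := by
  classical
  rw [mkOp, Finsupp.lsum_apply, Finsupp.sum_apply, Finsupp.sum]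
  simp only [LinearMap.toSpanSingleton_apply, Finsupp.smul_apply, Finsupp.single_apply,
    smul_eq_mul, mul_ite, mul_zero]
  rw [Finset.sum_ite_eq' v.support m fun k => v k * u k]
  by_cases h : m ∈ v.support
  · simp [h, mul_comm]
  · simp [h, Finsupp.notMem_support_iff.mp h]

lemma rhoOp_apply (u : Fin n → K) (i : Fin n) (v : (Fin n → ℕ) →₀ K) (m : Fin n → ℕ) :
    rhoOp u i v m = u i ^ m i * v m := by
  classical
  rw [rhoOp, mkOp, Finsupp.lsum_apply, Finsupp.sum_apply, Finsupp.sum]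
  simp only [LinearMap.toSpanSingleton_apply, Finsupp.smul_apply, Finsupp.single_apply,
    smul_eq_mul, mul_ite, mul_zero]
  rw [Finset.sum_ite_eq' v.support m fun k => v k * u i ^ k i]
  by_cases h : m ∈ v.support
  · simp [h, mul_comm]
  · simp [h, Finsupp.notMem_support_iff.mp h]

/-- eigenvalue separation: two distinct exponents are separated by some r or s power. -/
lemma sep (r s : Fin n → K) (hr : ∀ i, r i ≠ 0) (hs : ∀ i, s i ≠ 0)
    (hpq : ∀ i, ∀ p q : ℤ, (r i) ^ p = (s i) ^ q → p = 0 ∧ q = 0)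
    {k k' : Fin n → ℕ} (hne : k ≠ k') :
    ∃ i, r i ^ k i ≠ r i ^ k' i ∨ s i ^ k i ≠ s i ^ k' i := by
  obtain ⟨i, hi⟩ := Function.ne_iff.mp hne
  refine ⟨i, ?_⟩
  by_contra h
  push_neg at h
  obtain ⟨h1, h2⟩ := h
  have hz : (r i) ^ ((k i : ℤ) - (k' i : ℤ)) = (s i) ^ (0 : ℤ) := by
    rw [zpow_zero, zpow_sub₀ (hr i), zpow_natCast, zpow_natCast, h1,
      div_self (pow_ne_zero _ (hr i))]
  have := (hpq i _ _ hz).1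
  omega

lemma qint_ne_zero {r s : K} (hrs : r ^ 2 ≠ s ^ 2)
    (hpq : ∀ p q : ℤ, r ^ p = s ^ q → p = 0 ∧ q = 0) {m : ℕ} (hm : 0 < m) :
    qint r s m ≠ 0 := by
  have hnum : r ^ (2 * m) ≠ s ^ (2 * m) := by
    intro h
    have hz : r ^ ((2 * m : ℕ) : ℤ) = s ^ ((2 * m : ℕ) : ℤ) := by
      rw [zpow_natCast, zpow_natCast, h]
    have := (hpq _ _ hz).1
    omega
  exact div_ne_zero (sub_ne_zero.mpr hnum) (sub_ne_zero.mpr hrs)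

end aux

/-- under Assumption 1.1 (`r_i^p = s_i^q` only for `(p,q) = (0,0)`),
the polynomial module `P(n)` is a simple module for `A_{r,s}(n)`: any nonzero subspace
invariant under all the operators `ρ_i^{±1}, σ_i^{±1}, x_i, y_i` is everything. -/
theorem stmt6 {K : Type*} [Field K] (n : ℕ) (hn : 1 ≤ n)
    (r s : Fin n → K) (hr : ∀ i, r i ≠ 0) (hs : ∀ i, s i ≠ 0)
    (hrs : ∀ i, (r i) ^ 2 ≠ (s i) ^ 2)
    (hpq : ∀ i, ∀ p q : ℤ, (r i) ^ p = (s i) ^ q → p = 0 ∧ q = 0)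
    (W : Submodule K ((Fin n → ℕ) →₀ K))
    (hinv : ∀ i : Fin n, ∀ v ∈ W,
      rhoOp r i v ∈ W ∧ rhoInvOp r i v ∈ W ∧ rhoOp s i v ∈ W ∧ rhoInvOp s i v ∈ W ∧
      xOp i v ∈ W ∧ yOp r s i v ∈ W)
    (hW : W ≠ ⊥) :
    W = ⊤ := by
  classical
  -- Step 0: a nonzero vector in W
  obtain ⟨v0, hv0W, hv0⟩ := Submodule.exists_mem_ne_zero_of_ne_bot hW
  -- Step 1: W contains some monomial
  have step1 : ∃ k : Fin n → ℕ, Finsupp.single k (1 : K) ∈ W := by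
    have key : ∀ N : ℕ, ∀ v : (Fin n → ℕ) →₀ K, v ∈ W → v ≠ 0 → v.support.card ≤ N →
        ∃ k : Fin n → ℕ, Finsupp.single k (1 : K) ∈ W := by
      intro N
      induction N with
      | zero =>
        intro v hvW hv hcard
        exact absurd (Finset.card_eq_zero.mp (Nat.le_zero.mp hcard))
          (Finsupp.support_nonempty_iff.mpr hv).ne_empty
      | succ N ih =>
        intro v hvW hv hcard
        by_cases h1 : v.support.card = 1
        · obtain ⟨a, ha, hv_eq⟩ := Finsupp.card_support_eq_one.mp h1
          set c := v a with hc
          refine ⟨a, ?_⟩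
          have : Finsupp.single a (1 : K) = c⁻¹ • v := by
            rw [hv_eq, Finsupp.smul_single, smul_eq_mul, inv_mul_cancel₀ ha]
          rw [this]
          exact W.smul_mem _ hvW
        · -- at least two elements in support
          have h2 : 1 < v.support.card := by
            have hpos : 0 < v.support.card :=
              Finset.card_pos.mpr (Finsupp.support_nonempty_iff.mpr hv)
            omega
          obtain ⟨k, hk, k', hk', hkk'⟩ := Finset.one_lt_card.mp h2
          obtain ⟨i, hi⟩ := sep r s hr hs hpq hkk'
          -- choose u ∈ {r, s} separating at i
          have main : ∀ u : Fin n → K, (∀ w ∈ W, rhoOp u i w ∈ W) →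
              u i ^ k i ≠ u i ^ k' i →
              ∃ k : Fin n → ℕ, Finsupp.single k (1 : K) ∈ W := by
            intro u huW hune
            set w : (Fin n → ℕ) →₀ K := rhoOp u i v - (u i ^ k' i) • v with hw
            have hwW : w ∈ W := W.sub_mem (huW v hvW) (W.smul_mem _ hvW)
            have hwapp : ∀ m, w m = (u i ^ m i - u i ^ k' i) * v m := by
              intro m
              simp [hw, rhoOp_apply, sub_mul]
            have hksupp : k ∈ w.support := by
              rw [Finsupp.mem_support_iff, hwapp]
              exact mul_ne_zero (sub_ne_zero.mpr hune) (Finsupp.mem_support_iff.mp hk)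
            have hsub : w.support ⊆ v.support.erase k' := by
              intro m hm
              rw [Finsupp.mem_support_iff, hwapp] at hm
              refine Finset.mem_erase.mpr ⟨?_, ?_⟩
              · rintro rfl
                simp at hm
              · exact Finsupp.mem_support_iff.mpr fun h => hm (by rw [h, mul_zero])
            have hwne : w ≠ 0 := by
              intro h
              rw [h] at hksupp
              simp at hksupp
            have hcard' : w.support.card ≤ N := by
              calc w.support.card ≤ (v.support.erase k').card := Finset.card_le_card hsub
                _ = v.support.card - 1 := Finset.card_erase_of_mem hk'
                _ ≤ N := by omega
            exact ih w hwW hwne hcard'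
          rcases hi with hi | hi
          · exact main r (fun w hw => (hinv i w hw).1) hi
          · exact main s (fun w hw => (hinv i w hw).2.2.1) hi
    exact key v0.support.card v0 hv0W hv0 le_rfl
  obtain ⟨k0, hk0⟩ := step1
  -- Step 2: descend to the constant monomial
  have sum_update : ∀ (k : Fin n → ℕ) (i : Fin n), 0 < k i →
      (∑ j, Function.update k i (k i - 1) j) + 1 = ∑ j, k j := by
    intro k i hki
    rw [Finset.sum_update_of_mem (Finset.mem_univ i),
      ← Finset.add_sum_erase _ k (Finset.mem_univ i), Finset.erase_eq]
    omega
  have step2 : Finsupp.single (0 : Fin n → ℕ) (1 : K) ∈ W := by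
    have key : ∀ N : ℕ, ∀ k : Fin n → ℕ, (∑ j, k j) ≤ N →
        Finsupp.single k (1 : K) ∈ W → Finsupp.single (0 : Fin n → ℕ) (1 : K) ∈ W := by
      intro N
      induction N with
      | zero =>
        intro k hsum hk
        have : k = 0 := by
          funext j
          have := Finset.sum_eq_zero_iff.mp (Nat.le_zero.mp hsum) j (Finset.mem_univ j)
          simpa using this
        rwa [this] at hk
      | succ N ih =>
        intro k hsum hk
        by_cases hz : k = 0
        · rwa [hz] at hk
        · obtain ⟨i, hi⟩ := Function.ne_iff.mp hz
          have hki : 0 < k i := Nat.pos_of_ne_zero (by simpa using hi)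
          have hy : yOp r s i (Finsupp.single k (1 : K)) ∈ W := (hinv i _ hk).2.2.2.2.2
          have hy_eq : yOp r s i (Finsupp.single k (1 : K)) =
              qint (r i) (s i) (k i) • Finsupp.single (Function.update k i (k i - 1)) (1 : K) := by
            rw [yOp, mkOp_single, one_smul]
          have hq : qint (r i) (s i) (k i) ≠ 0 := qint_ne_zero (hrs i) (hpq i) hki
          have hnext : Finsupp.single (Function.update k i (k i - 1)) (1 : K) ∈ W := by
            have : Finsupp.single (Function.update k i (k i - 1)) (1 : K) =
                (qint (r i) (s i) (k i))⁻¹ • yOp r s i (Finsupp.single k (1 : K)) := by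
              rw [hy_eq, smul_smul, inv_mul_cancel₀ hq, one_smul]
            rw [this]
            exact W.smul_mem _ hy
          have := sum_update k i hki
          exact ih _ (by omega) hnext
    exact key (∑ j, k0 j) k0 le_rfl hk0
  -- Step 3: ascend to all monomials
  have step3 : ∀ m : Fin n → ℕ, Finsupp.single m (1 : K) ∈ W := by
    have key : ∀ N : ℕ, ∀ m : Fin n → ℕ, (∑ j, m j) ≤ N →
        Finsupp.single m (1 : K) ∈ W := by
      intro N
      induction N with
      | zero =>
        intro m hsum
        have : m = 0 := by
          funext j
          have := Finset.sum_eq_zero_iff.mp (Nat.le_zero.mp hsum) j (Finset.mem_univ j)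
          simpa using this
        rwa [this]
      | succ N ih =>
        intro m hsum
        by_cases hz : m = 0
        · rwa [hz]
        · obtain ⟨i, hi⟩ := Function.ne_iff.mp hz
          have hmi : 0 < m i := Nat.pos_of_ne_zero (by simpa using hi)
          set m' := Function.update m i (m i - 1) with hm'
          have hsum' : (∑ j, m' j) ≤ N := by
            have h := sum_update m i hmi
            rw [hm']
            omega
          have hm'W : Finsupp.single m' (1 : K) ∈ W := ih m' hsum'
          have hx : xOp i (Finsupp.single m' (1 : K)) ∈ W := (hinv i _ hm'W).2.2.2.2.1
          have hup : Function.update m' i (m' i + 1) = m := by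
            funext j
            by_cases hj : j = i
            · subst hj
              simp [hm', Function.update_self]
              omega
            · simp [hm', Function.update_of_ne hj]
          have hx_eq : xOp i (Finsupp.single m' (1 : K)) = Finsupp.single m (1 : K) := by
            rw [xOp, mkOp_single, one_smul, hup]
          rwa [hx_eq] at hx
    exact fun m => key (∑ j, m j) m le_rfl
  -- Conclusion
  rw [eq_top_iff]
  intro v _
  induction v using Finsupp.induction with
  | zero => exact W.zero_mem
  | single_add a b f _ _ ihf =>
    refine W.add_mem ?_ (ihf trivial)
    have : Finsupp.single a b = b • Finsupp.single a (1 : K) := by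
      rw [Finsupp.smul_single, smul_eq_mul, mul_one]
    rw [this]
    exact W.smul_mem _ (step3 a)
end

section
/- Let K be a field, n ≥ 2, and r_i, s_i ∈ K× with r_i^2 ≠ s_i^2. In the multiparameter Weyl algebra A_{r,s}(n) with generators ρ_i^{±1}, σ_i^{±1}, x_i, y_i satisfying (R1)–(R5), the elements e_i := y_{i+1} x_i and f_i := y_i x_{i+1} (1 ≤ i < n) satisfy the quantum Serre-type relation [e_i, [e_i, e_{i+1}]_{r_{i+1}^2}]_{s_{i+1}^2} = 0, where [a,b]_q = ab − q·ba. -/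
/-- Auxiliary: the quantum Serre relation for `e = u*X`, `e' = v*w`, given that
`X` and `v` commute with everything in sight and `u, w` satisfy the down-up
relation. -/
theorem stmt12_aux {K : Type*} [Field K] {A : Type*} [Ring A] [Algebra K A]
    (r s : K) (u w X v : A)
    (cXu : X * u = u * X) (cXw : X * w = w * X) (cXv : X * v = v * X)
    (cvu : v * u = u * v) (cvw : v * w = w * v)
    (hdu : u * (u * w) - (r ^ 2 + s ^ 2) • (u * (w * u))
        + (r ^ 2 * s ^ 2) • (w * (u * u)) = 0) :
    (u * X) * ((u * X) * (v * w) - r ^ 2 • ((v * w) * (u * X)))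
      - s ^ 2 • (((u * X) * (v * w) - r ^ 2 • ((v * w) * (u * X))) * (u * X)) = 0 := by
  have cvX : v * X = X * v := cXv.symm
  have cXu' : ∀ z : A, X * (u * z) = u * (X * z) := fun z => by
    rw [← mul_assoc, cXu, mul_assoc]
  have cXw' : ∀ z : A, X * (w * z) = w * (X * z) := fun z => by
    rw [← mul_assoc, cXw, mul_assoc]
  have cvu' : ∀ z : A, v * (u * z) = u * (v * z) := fun z => by
    rw [← mul_assoc, cvu, mul_assoc]
  have cvw' : ∀ z : A, v * (w * z) = w * (v * z) := fun z => by
    rw [← mul_assoc, cvw, mul_assoc]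
  have cvX' : ∀ z : A, v * (X * z) = X * (v * z) := fun z => by
    rw [← mul_assoc, cvX, mul_assoc]
  have h1 : (u * X) * ((u * X) * (v * w)) = u * (u * (w * (X * (X * v)))) := by
    simp only [mul_assoc, cXu, cXw, cvu, cvw, cvX, cXu', cXw', cvu', cvw', cvX']
  have h2 : (u * X) * ((v * w) * (u * X)) = u * (w * (u * (X * (X * v)))) := by
    simp only [mul_assoc, cXu, cXw, cvu, cvw, cvX, cXu', cXw', cvu', cvw', cvX']
  have h3 : ((u * X) * (v * w)) * (u * X) = u * (w * (u * (X * (X * v)))) := by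
    simp only [mul_assoc, cXu, cXw, cvu, cvw, cvX, cXu', cXw', cvu', cvw', cvX']
  have h4 : ((v * w) * (u * X)) * (u * X) = w * (u * (u * (X * (X * v)))) := by
    simp only [mul_assoc, cXu, cXw, cvu, cvw, cvX, cXu', cXw', cvu', cvw', cvX']
  have hdu' : u * (u * (w * (X * (X * v)))) - (r ^ 2 + s ^ 2) • (u * (w * (u * (X * (X * v)))))
      + (r ^ 2 * s ^ 2) • (w * (u * (u * (X * (X * v))))) = 0 := by
    have h := congrArg (· * (X * (X * v))) hdu
    simp only [sub_mul, add_mul, smul_mul_assoc, zero_mul, mul_assoc] at h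
    linear_combination (norm := module) h
  calc (u * X) * ((u * X) * (v * w) - r ^ 2 • ((v * w) * (u * X)))
        - s ^ 2 • (((u * X) * (v * w) - r ^ 2 • ((v * w) * (u * X))) * (u * X))
      = (u * X) * ((u * X) * (v * w)) - r ^ 2 • ((u * X) * ((v * w) * (u * X)))
        - s ^ 2 • (((u * X) * (v * w)) * (u * X))
        + (s ^ 2 * r ^ 2) • (((v * w) * (u * X)) * (u * X)) := by
        simp only [mul_sub, sub_mul, smul_mul_assoc, mul_smul_comm, smul_sub, smul_smul]
        abel
    _ = 0 := by
        rw [h1, h2, h3, h4]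
        linear_combination (norm := module) hdu'


/-- in `A_{r,s}(n)` (here: any algebra with elements satisfying the
defining relations (R1)-(R5)), the elements `e_i = y_{i+1} x_i` satisfy the quantum
Serre-type relation `[e_i, [e_i, e_{i+1}]_{r_{i+1}²}]_{s_{i+1}²} = 0`,
where `[a,b]_q = ab - q·ba`.  (Indices are 0-based: the paper's `e_i`, `1 ≤ i < n`,
is `e ⟨i-1⟩` here.) -/
theorem stmt12 {K : Type*} [Field K] {A : Type*} [Ring A] [Algebra K A]
    (n : ℕ) (hn : 2 ≤ n) (r s : Fin n → K)
    (hr : ∀ i, r i ≠ 0) (hs : ∀ i, s i ≠ 0) (hrs : ∀ i, (r i) ^ 2 ≠ (s i) ^ 2)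
    (ρ ρ' σ σ' x y : Fin n → A)
    -- (R1)
    (hcomm : ∀ i j, ρ i * ρ j = ρ j * ρ i ∧ ρ i * σ j = σ j * ρ i ∧ σ i * σ j = σ j * σ i)
    (hinv : ∀ i, ρ i * ρ' i = 1 ∧ ρ' i * ρ i = 1 ∧ σ i * σ' i = 1 ∧ σ' i * σ i = 1)
    -- (R2)
    (hρx : ∀ i j, ρ i * x j = (if i = j then r i else 1) • (x j * ρ i))
    (hρy : ∀ i j, ρ i * y j = (if i = j then r i else 1)⁻¹ • (y j * ρ i))
    -- (R3)
    (hσx : ∀ i j, σ i * x j = (if i = j then s i else 1) • (x j * σ i))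
    (hσy : ∀ i j, σ i * y j = (if i = j then s i else 1)⁻¹ • (y j * σ i))
    -- (R4)
    (hxx : ∀ i j, x i * x j = x j * x i) (hyy : ∀ i j, y i * y j = y j * y i)
    (hyx : ∀ i j, i ≠ j → y i * x j = x j * y i)
    -- (R5)
    (hR5r : ∀ i, y i * x i - (r i) ^ 2 • (x i * y i) = σ i * σ i)
    (hR5s : ∀ i, y i * x i - (s i) ^ 2 • (x i * y i) = ρ i * ρ i)
    (i : ℕ) (hi2 : i + 2 < n) :
    (y ⟨i + 1, by omega⟩ * x ⟨i, by omega⟩) *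
        ((y ⟨i + 1, by omega⟩ * x ⟨i, by omega⟩) * (y ⟨i + 2, by omega⟩ * x ⟨i + 1, by omega⟩)
          - (r ⟨i + 1, by omega⟩) ^ 2 •
            ((y ⟨i + 2, by omega⟩ * x ⟨i + 1, by omega⟩) * (y ⟨i + 1, by omega⟩ * x ⟨i, by omega⟩)))
      - (s ⟨i + 1, by omega⟩) ^ 2 •
        (((y ⟨i + 1, by omega⟩ * x ⟨i, by omega⟩) * (y ⟨i + 2, by omega⟩ * x ⟨i + 1, by omega⟩)
          - (r ⟨i + 1, by omega⟩) ^ 2 •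
            ((y ⟨i + 2, by omega⟩ * x ⟨i + 1, by omega⟩) * (y ⟨i + 1, by omega⟩ * x ⟨i, by omega⟩)))
          * (y ⟨i + 1, by omega⟩ * x ⟨i, by omega⟩)) = 0 := by
  set a : Fin n := ⟨i, by omega⟩
  set b : Fin n := ⟨i + 1, by omega⟩
  set c : Fin n := ⟨i + 2, by omega⟩
  have hba : b ≠ a := by simp only [a, b, ne_eq, Fin.mk.injEq]; omega
  have hca : c ≠ a := by simp only [a, c, ne_eq, Fin.mk.injEq]; omega
  have hcb : c ≠ b := by simp only [b, c, ne_eq, Fin.mk.injEq]; omega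
  -- the y σ = s • σ y commutation for index b
  have hyσ : y b * σ b = s b • (σ b * y b) := by
    have h := hσy b b
    rw [if_pos rfl] at h
    rw [h, smul_smul, mul_inv_cancel₀ (hs b), one_smul]
  have hstep : y b * (σ b * σ b) = (s b) ^ 2 • ((σ b * σ b) * y b) := by
    calc y b * (σ b * σ b) = (y b * σ b) * σ b := by rw [mul_assoc]
      _ = (s b • (σ b * y b)) * σ b := by rw [hyσ]
      _ = s b • (σ b * (y b * σ b)) := by rw [smul_mul_assoc, mul_assoc]
      _ = s b • (σ b * (s b • (σ b * y b))) := by rw [hyσ]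
      _ = (s b * s b) • (σ b * (σ b * y b)) := by rw [mul_smul_comm, smul_smul]
      _ = (s b) ^ 2 • ((σ b * σ b) * y b) := by rw [sq, mul_assoc]
  have hσσ := hR5r b
  -- the down-up relation at index b
  have hdu : y b * (y b * x b) - ((r b) ^ 2 + (s b) ^ 2) • (y b * (x b * y b))
      + ((r b) ^ 2 * (s b) ^ 2) • (x b * (y b * y b)) = 0 := by
    have e1 : y b * (y b * x b) - (r b) ^ 2 • (y b * (x b * y b)) = y b * (σ b * σ b) := by
      rw [← mul_smul_comm, ← mul_sub, hσσ]
    have e2 : (σ b * σ b) * y b = (y b * x b) * y b - (r b) ^ 2 • ((x b * y b) * y b) := by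
      rw [← hσσ, sub_mul, smul_mul_assoc]
    have e3 : y b * (y b * x b) - (r b) ^ 2 • (y b * (x b * y b))
        = (s b) ^ 2 • (y b * (x b * y b))
          - ((r b) ^ 2 * (s b) ^ 2) • (x b * (y b * y b)) := by
      rw [e1, hstep, e2, smul_sub, smul_smul, mul_assoc, mul_assoc]
      rw [mul_comm ((s b) ^ 2) ((r b) ^ 2)]
    linear_combination (norm := module) e3
  exact stmt12_aux (r b) (s b) (y b) (x b) (x a) (y c)
    ((hyx b a hba).symm) (hxx a b) ((hyx c a hca).symm) (hyy c b) (hyx c b hcb) hdu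
end

section
/- Let K be a field, r, s ∈ K× with r^2 ≠ s^2 and satisfying: r^p = s^q (p,q ∈ ℤ) implies p = q = 0. In the algebra A_{r,s}(1), conjugation by ρ sends x ↦ r x, y ↦ r^{-1} y, fixes ρ and σ, and conjugation by σ sends x ↦ s x, y ↦ s^{-1} y, fixes ρ and σ; moreover the automorphism given by conjugation by ρ^p σ^{-q} is the identity on A_{r,s}(1) if and only if r^p = s^q, i.e., if and only if (p,q) = (0,0). -/
/-- Generators of the multiparameter Weyl algebra `A_{r,s}(1)`:
`ρ, ρ⁻¹, σ, σ⁻¹, x, y`. -/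
inductive ArsGen : Type
  | R | Rinv | S | Sinv | X | Y

open FreeAlgebra in
/-- Defining relations (R1)-(R5) of `A_{r,s}(1)`. -/
inductive ArsRel (K : Type*) [Field K] (r s : K) :
    FreeAlgebra K ArsGen → FreeAlgebra K ArsGen → Prop
  | comm : ArsRel K r s (ι K ArsGen.R * ι K ArsGen.S) (ι K ArsGen.S * ι K ArsGen.R)
  | rinv1 : ArsRel K r s (ι K ArsGen.R * ι K ArsGen.Rinv) 1
  | rinv2 : ArsRel K r s (ι K ArsGen.Rinv * ι K ArsGen.R) 1
  | sinv1 : ArsRel K r s (ι K ArsGen.S * ι K ArsGen.Sinv) 1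
  | sinv2 : ArsRel K r s (ι K ArsGen.Sinv * ι K ArsGen.S) 1
  | commRinv : ArsRel K r s (ι K ArsGen.Rinv * ι K ArsGen.S) (ι K ArsGen.S * ι K ArsGen.Rinv)
  | commSinv : ArsRel K r s (ι K ArsGen.R * ι K ArsGen.Sinv) (ι K ArsGen.Sinv * ι K ArsGen.R)
  | commInvInv :
      ArsRel K r s (ι K ArsGen.Rinv * ι K ArsGen.Sinv) (ι K ArsGen.Sinv * ι K ArsGen.Rinv)
  | rx : ArsRel K r s (ι K ArsGen.R * ι K ArsGen.X) (r • (ι K ArsGen.X * ι K ArsGen.R))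
  | ry : ArsRel K r s (ι K ArsGen.R * ι K ArsGen.Y) (r⁻¹ • (ι K ArsGen.Y * ι K ArsGen.R))
  | sx : ArsRel K r s (ι K ArsGen.S * ι K ArsGen.X) (s • (ι K ArsGen.X * ι K ArsGen.S))
  | sy : ArsRel K r s (ι K ArsGen.S * ι K ArsGen.Y) (s⁻¹ • (ι K ArsGen.Y * ι K ArsGen.S))
  | r5a : ArsRel K r s (ι K ArsGen.Y * ι K ArsGen.X - r ^ 2 • (ι K ArsGen.X * ι K ArsGen.Y))
      (ι K ArsGen.S * ι K ArsGen.S)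
  | r5b : ArsRel K r s (ι K ArsGen.Y * ι K ArsGen.X - s ^ 2 • (ι K ArsGen.X * ι K ArsGen.Y))
      (ι K ArsGen.R * ι K ArsGen.R)

/-- The multiparameter Weyl algebra `A_{r,s}(1)`, presented by generators and relations. -/
abbrev Ars1 (K : Type*) [Field K] (r s : K) : Type _ := RingQuot (ArsRel K r s)

section elts
variable (K : Type*) [Field K] (r s : K)

noncomputable def arsρ : Ars1 K r s := RingQuot.mkAlgHom K (ArsRel K r s) (FreeAlgebra.ι K ArsGen.R)
noncomputable def arsρinv : Ars1 K r s := RingQuot.mkAlgHom K (ArsRel K r s) (FreeAlgebra.ι K ArsGen.Rinv)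
noncomputable def arsσ : Ars1 K r s := RingQuot.mkAlgHom K (ArsRel K r s) (FreeAlgebra.ι K ArsGen.S)
noncomputable def arsσinv : Ars1 K r s := RingQuot.mkAlgHom K (ArsRel K r s) (FreeAlgebra.ι K ArsGen.Sinv)
noncomputable def arsx : Ars1 K r s := RingQuot.mkAlgHom K (ArsRel K r s) (FreeAlgebra.ι K ArsGen.X)
noncomputable def arsy : Ars1 K r s := RingQuot.mkAlgHom K (ArsRel K r s) (FreeAlgebra.ι K ArsGen.Y)

/-- `u^k` for `k : ℤ`, where `uinv` is a two-sided inverse of `u`. -/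
noncomputable def zpowOf {A : Type*} [Ring A] (u uinv : A) (k : ℤ) : A :=
  if 0 ≤ k then u ^ k.toNat else uinv ^ (-k).toNat

end elts

section Aux
variable {K : Type*} [Field K]

noncomputable def opV (K : Type*) [Field K] (f : ℕ → (ℕ →₀ K)) : Module.End K (ℕ →₀ K) :=
  Finsupp.lift (ℕ →₀ K) K ℕ f

noncomputable def eV (K : Type*) [Field K] (n : ℕ) : (ℕ →₀ K) := Finsupp.single n 1

lemma opV_e (f : ℕ → (ℕ →₀ K)) (n : ℕ) : opV K f (eV K n) = f n := by
  simp [opV, eV]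

lemma end_ext {A B : Module.End K (ℕ →₀ K)} (h : ∀ n, A (eV K n) = B (eV K n)) : A = B := by
  apply Finsupp.lhom_ext'
  intro n
  apply LinearMap.ext_ring
  simpa [eV] using h n

/-- coefficient of the representation of `y`. -/
noncomputable def ccY (r s : K) (n : ℕ) : K := (s ^ (2*n) - r ^ (2*n)) / (s ^ 2 - r ^ 2)

noncomputable def Xop (K : Type*) [Field K] : Module.End K (ℕ →₀ K) :=
  opV K (fun n => eV K (n+1))

noncomputable def Yop (r s : K) : Module.End K (ℕ →₀ K) :=
  opV K (fun n => ccY r s n • eV K (n-1))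

noncomputable def Dop (t : K) : Module.End K (ℕ →₀ K) :=
  opV K (fun n => t ^ n • eV K n)

variable {r s : K}

lemma ccY_zero : ccY r s 0 = 0 := by simp [ccY]

lemma ccY_succ_r (h : s ^ 2 - r ^ 2 ≠ 0) (n : ℕ) :
    ccY r s (n+1) - r ^ 2 * ccY r s n = s ^ (2*n) := by
  unfold ccY
  field_simp
  ring

lemma ccY_succ_s (h : s ^ 2 - r ^ 2 ≠ 0) (n : ℕ) :
    ccY r s (n+1) - s ^ 2 * ccY r s n = r ^ (2*n) := by
  unfold ccY
  field_simp
  ring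

lemma Xop_e (n : ℕ) : Xop K (eV K n) = eV K (n+1) := opV_e _ _
lemma Yop_e (n : ℕ) : Yop r s (eV K n) = ccY r s n • eV K (n-1) := opV_e _ _
lemma Dop_e (t : K) (n : ℕ) : Dop t (eV K n) = t ^ n • eV K n := opV_e _ _

lemma XYop_e (n : ℕ) : (Xop K * Yop r s) (eV K n) = ccY r s n • eV K n := by
  rw [Module.End.mul_apply, Yop_e, map_smul, Xop_e]
  cases n with
  | zero => simp [ccY_zero]
  | succ m => rfl

lemma YXop_e (n : ℕ) : (Yop r s * Xop K) (eV K n) = ccY r s (n+1) • eV K n := by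
  rw [Module.End.mul_apply, Xop_e, Yop_e]
  norm_num

lemma DDop (a b : K) : Dop a * Dop b = opV K (fun n => (a^n * b^n) • eV K n) := by
  apply end_ext
  intro n
  rw [Module.End.mul_apply, Dop_e, map_smul, Dop_e, opV_e, smul_smul, mul_comm]

lemma Dop_pow_e0 (t : K) (m : ℕ) : (Dop t ^ m) (eV K 0) = eV K 0 := by
  induction m with
  | zero => rfl
  | succ k ih => rw [pow_succ, Module.End.mul_apply, Dop_e, pow_zero, one_smul, ih]

end Aux

section Rep
variable {K : Type*} [Field K] (r s : K)

/-- Interpretation of the generators on `ℕ →₀ K`. -/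
noncomputable def arsGenOp : ArsGen → Module.End K (ℕ →₀ K)
  | ArsGen.R => Dop r
  | ArsGen.Rinv => Dop r⁻¹
  | ArsGen.S => Dop s
  | ArsGen.Sinv => Dop s⁻¹
  | ArsGen.X => Xop K
  | ArsGen.Y => Yop r s

noncomputable def arsFree : FreeAlgebra K ArsGen →ₐ[K] Module.End K (ℕ →₀ K) :=
  FreeAlgebra.lift K (arsGenOp r s)

lemma arsFree_rel (hr : r ≠ 0) (hs : s ≠ 0) (hrs2 : r ^ 2 ≠ s ^ 2)
    {a b : FreeAlgebra K ArsGen} (h : ArsRel K r s a b) :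
    arsFree r s a = arsFree r s b := by
  have hΔ : s ^ 2 - r ^ 2 ≠ 0 := sub_ne_zero.mpr (Ne.symm hrs2)
  have hc1 : ccY r s 1 = 1 := by
    rw [ccY]; norm_num; exact hΔ
  induction h <;>
      simp only [map_mul, map_smul, map_sub, map_one, arsFree, FreeAlgebra.lift_ι_apply,
        arsGenOp] <;>
      apply end_ext <;> intro n
  case comm =>
    simp [Module.End.mul_apply, Dop_e, smul_smul, mul_comm]
  case rinv1 =>
    simp [Module.End.mul_apply, Dop_e, smul_smul, inv_pow,
      mul_inv_cancel₀ (pow_ne_zero n hr), inv_mul_cancel₀ (pow_ne_zero n hr)]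
  case rinv2 =>
    simp [Module.End.mul_apply, Dop_e, smul_smul, inv_pow,
      mul_inv_cancel₀ (pow_ne_zero n hr), inv_mul_cancel₀ (pow_ne_zero n hr)]
  case sinv1 =>
    simp [Module.End.mul_apply, Dop_e, smul_smul, inv_pow,
      mul_inv_cancel₀ (pow_ne_zero n hs), inv_mul_cancel₀ (pow_ne_zero n hs)]
  case sinv2 =>
    simp [Module.End.mul_apply, Dop_e, smul_smul, inv_pow,
      mul_inv_cancel₀ (pow_ne_zero n hs), inv_mul_cancel₀ (pow_ne_zero n hs)]
  case commRinv =>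
    simp [Module.End.mul_apply, Dop_e, smul_smul, mul_comm]
  case commSinv =>
    simp [Module.End.mul_apply, Dop_e, smul_smul, mul_comm]
  case commInvInv =>
    simp [Module.End.mul_apply, Dop_e, smul_smul, mul_comm]
  case rx =>
    simp only [Module.End.mul_apply, LinearMap.smul_apply, Dop_e, Xop_e, map_smul, smul_smul]
    congr 1
    rw [pow_succ]; ring
  case ry =>
    cases n with
    | zero =>
      simp [Module.End.mul_apply, LinearMap.smul_apply, Dop_e, Yop_e, ccY_zero]
    | succ m =>
      simp only [Module.End.mul_apply, LinearMap.smul_apply, Dop_e, Yop_e, map_smul, smul_smul,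
        Nat.add_sub_cancel]
      congr 1
      field_simp
      ring
  case sx =>
    simp only [Module.End.mul_apply, LinearMap.smul_apply, Dop_e, Xop_e, map_smul, smul_smul]
    congr 1
    rw [pow_succ]; ring
  case sy =>
    cases n with
    | zero =>
      simp [Module.End.mul_apply, LinearMap.smul_apply, Dop_e, Yop_e, ccY_zero]
    | succ m =>
      simp only [Module.End.mul_apply, LinearMap.smul_apply, Dop_e, Yop_e, map_smul, smul_smul,
        Nat.add_sub_cancel]
      congr 1
      field_simp
      ring
  case r5a =>
    rw [LinearMap.sub_apply, LinearMap.smul_apply, XYop_e, YXop_e, Module.End.mul_apply,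
      Dop_e, map_smul, Dop_e, smul_smul, smul_smul, ← sub_smul]
    congr 1
    linear_combination ccY_succ_r hΔ n
  case r5b =>
    rw [LinearMap.sub_apply, LinearMap.smul_apply, XYop_e, YXop_e, Module.End.mul_apply,
      Dop_e, map_smul, Dop_e, smul_smul, smul_smul, ← sub_smul]
    congr 1
    linear_combination ccY_succ_s hΔ n

noncomputable def arsRep (hr : r ≠ 0) (hs : s ≠ 0) (hrs2 : r ^ 2 ≠ s ^ 2) :
    Ars1 K r s →ₐ[K] Module.End K (ℕ →₀ K) :=
  RingQuot.liftAlgHom K ⟨arsFree r s, fun {a b} h => arsFree_rel r s hr hs hrs2 h⟩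

end Rep

section Conj
variable {K : Type*} [Field K]

lemma pow_conj {A : Type*} [Ring A] [Algebra K A] {u x : A} {t : K}
    (h : u * x = t • (x * u)) (n : ℕ) : u ^ n * x = t ^ n • (x * u ^ n) := by
  induction n with
  | zero => simp
  | succ k ih =>
    calc u ^ (k+1) * x = u ^ k * (u * x) := by rw [pow_succ, mul_assoc]
    _ = t • (u ^ k * x * u) := by rw [h, mul_smul_comm, mul_assoc]
    _ = t • (t ^ k • (x * u ^ k) * u) := by rw [ih]
    _ = t ^ (k+1) • (x * u ^ (k+1)) := by
        rw [smul_mul_assoc, smul_smul, mul_assoc, mul_comm t, ← pow_succ, ← pow_succ]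

lemma zpowOf_conj {A : Type*} [Ring A] [Algebra K A] {u v x : A} {t : K}
    (h : u * x = t • (x * u)) (h' : v * x = t⁻¹ • (x * v)) (k : ℤ) :
    zpowOf u v k * x = t ^ k • (x * zpowOf u v k) := by
  unfold zpowOf
  split
  · rw [pow_conj h]
    congr 1
    rw [← zpow_natCast, Int.toNat_of_nonneg ‹_›]
  · rw [pow_conj h']
    congr 1
    rw [← zpow_natCast, Int.toNat_of_nonneg (by omega), inv_zpow, ← zpow_neg, neg_neg]

lemma map_zpowOf {A B : Type*} [Ring A] [Ring B] (φ : A →+* B) (u v : A) (k : ℤ) :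
    φ (zpowOf u v k) = zpowOf (φ u) (φ v) k := by
  unfold zpowOf
  split <;> rw [map_pow]

lemma map_zpowOf' {K A B : Type*} [CommSemiring K] [Ring A] [Ring B] [Algebra K A]
    [Algebra K B] (φ : A →ₐ[K] B) (u v : A) (k : ℤ) :
    φ (zpowOf u v k) = zpowOf (φ u) (φ v) k := by
  unfold zpowOf
  split <;> rw [map_pow]

lemma zpowOf_zero {A : Type*} [Ring A] (u v : A) : zpowOf u v 0 = 1 := by
  unfold zpowOf
  simp

lemma zpowOf_Dop_e0 {K : Type*} [Field K] (t t' : K) (k : ℤ) :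
    zpowOf (Dop t) (Dop t') k (eV K 0) = eV K 0 := by
  unfold zpowOf
  split <;> exact Dop_pow_e0 _ _

end Conj

section ArsLemmas
variable {K : Type*} [Field K] {r s : K}

local notation "ρ'" => arsρ K r s
local notation "ρi" => arsρinv K r s
local notation "σ'" => arsσ K r s
local notation "σi" => arsσinv K r s
local notation "x'" => arsx K r s
local notation "y'" => arsy K r s

lemma ars_rel {a b : FreeAlgebra K ArsGen} (h : ArsRel K r s a b) :
    RingQuot.mkAlgHom K (ArsRel K r s) a = RingQuot.mkAlgHom K (ArsRel K r s) b :=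
  RingQuot.mkAlgHom_rel K h

lemma hRRi : ρ' * ρi = 1 := by
  simpa [arsρ, arsρinv, map_mul] using ars_rel (ArsRel.rinv1 (K := K) (r := r) (s := s))

lemma hRiR : ρi * ρ' = 1 := by
  simpa [arsρ, arsρinv, map_mul] using ars_rel (ArsRel.rinv2 (K := K) (r := r) (s := s))

lemma hSSi : σ' * σi = 1 := by
  simpa [arsσ, arsσinv, map_mul] using ars_rel (ArsRel.sinv1 (K := K) (r := r) (s := s))

lemma hSiS : σi * σ' = 1 := by
  simpa [arsσ, arsσinv, map_mul] using ars_rel (ArsRel.sinv2 (K := K) (r := r) (s := s))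

lemma hRS : ρ' * σ' = σ' * ρ' := by
  simpa [arsρ, arsσ, map_mul] using ars_rel (ArsRel.comm (K := K) (r := r) (s := s))

lemma hRSi : ρ' * σi = σi * ρ' := by
  simpa [arsρ, arsσinv, map_mul] using ars_rel (ArsRel.commSinv (K := K) (r := r) (s := s))

lemma hRx : ρ' * x' = r • (x' * ρ') := by
  simpa [arsρ, arsx, map_mul, map_smul] using ars_rel (ArsRel.rx (K := K) (r := r) (s := s))

lemma hRy : ρ' * y' = r⁻¹ • (y' * ρ') := by
  simpa [arsρ, arsy, map_mul, map_smul] using ars_rel (ArsRel.ry (K := K) (r := r) (s := s))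

lemma hSx : σ' * x' = s • (x' * σ') := by
  simpa [arsσ, arsx, map_mul, map_smul] using ars_rel (ArsRel.sx (K := K) (r := r) (s := s))

lemma hSy : σ' * y' = s⁻¹ • (y' * σ') := by
  simpa [arsσ, arsy, map_mul, map_smul] using ars_rel (ArsRel.sy (K := K) (r := r) (s := s))

lemma hRix (hr : r ≠ 0) : ρi * x' = r⁻¹ • (x' * ρi) := by
  have h1 : ρi * (ρ' * x') * ρi = ρi * (r • (x' * ρ')) * ρi := by rw [hRx]
  have h2 : ρi * (ρ' * x') * ρi = x' * ρi := by
    rw [← mul_assoc, hRiR, one_mul]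
  have h3 : ρi * (r • (x' * ρ')) * ρi = r • (ρi * x') := by
    rw [mul_smul_comm, smul_mul_assoc, mul_assoc, mul_assoc, hRRi, mul_one]
  have h4 : x' * ρi = r • (ρi * x') := by rw [← h2, h1, h3]
  rw [h4, smul_smul, inv_mul_cancel₀ hr, one_smul]

lemma hSix (hs : s ≠ 0) : σi * x' = s⁻¹ • (x' * σi) := by
  have h1 : σi * (σ' * x') * σi = σi * (s • (x' * σ')) * σi := by rw [hSx]
  have h2 : σi * (σ' * x') * σi = x' * σi := by
    rw [← mul_assoc, hSiS, one_mul]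
  have h3 : σi * (s • (x' * σ')) * σi = s • (σi * x') := by
    rw [mul_smul_comm, smul_mul_assoc, mul_assoc, mul_assoc, hSSi, mul_one]
  have h4 : x' * σi = s • (σi * x') := by rw [← h2, h1, h3]
  rw [h4, smul_smul, inv_mul_cancel₀ hs, one_smul]

end ArsLemmas

/-- in `A_{r,s}(1)`, conjugation by `ρ` sends `x ↦ rx`, `y ↦ r⁻¹y` and
fixes `ρ, σ`; conjugation by `σ` sends `x ↦ sx`, `y ↦ s⁻¹y` and fixes `ρ, σ`; and
conjugation by `ρ^p σ^{-q}` is the identity automorphism iff `r^p = s^q` iff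
`(p,q) = (0,0)`.  (Conjugation by the invertible element `c = ρ^p σ^{-q}` is the
identity iff `c` is central.) -/
theorem stmt15 {K : Type*} [Field K] (r s : K) (hr : r ≠ 0) (hs : s ≠ 0)
    (hrs2 : r ^ 2 ≠ s ^ 2) (hpq : ∀ p q : ℤ, r ^ p = s ^ q → p = 0 ∧ q = 0)
    (p q : ℤ) :
    (arsρ K r s * arsx K r s * arsρinv K r s = r • arsx K r s) ∧
    (arsρ K r s * arsy K r s * arsρinv K r s = r⁻¹ • arsy K r s) ∧
    (arsρ K r s * arsρ K r s * arsρinv K r s = arsρ K r s) ∧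
    (arsρ K r s * arsσ K r s * arsρinv K r s = arsσ K r s) ∧
    (arsσ K r s * arsx K r s * arsσinv K r s = s • arsx K r s) ∧
    (arsσ K r s * arsy K r s * arsσinv K r s = s⁻¹ • arsy K r s) ∧
    (arsσ K r s * arsρ K r s * arsσinv K r s = arsρ K r s) ∧
    (arsσ K r s * arsσ K r s * arsσinv K r s = arsσ K r s) ∧
    ((∀ a : Ars1 K r s,
        (zpowOf (arsρ K r s) (arsρinv K r s) p * zpowOf (arsσ K r s) (arsσinv K r s) (-q)) * a
          = a * (zpowOf (arsρ K r s) (arsρinv K r s) p * zpowOf (arsσ K r s) (arsσinv K r s) (-q)))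
        ↔ r ^ p = s ^ q) ∧
    ((∀ a : Ars1 K r s,
        (zpowOf (arsρ K r s) (arsρinv K r s) p * zpowOf (arsσ K r s) (arsσinv K r s) (-q)) * a
          = a * (zpowOf (arsρ K r s) (arsρinv K r s) p * zpowOf (arsσ K r s) (arsσinv K r s) (-q)))
        ↔ (p = 0 ∧ q = 0)) := by
  classical
  have hRRi' : arsρ K r s * arsρinv K r s = 1 := hRRi
  have hSSi' : arsσ K r s * arsσinv K r s = 1 := hSSi
  refine ⟨?_, ?_, ?_, ?_, ?_, ?_, ?_, ?_, ?_, ?_⟩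
  · rw [hRx, smul_mul_assoc, mul_assoc, hRRi', mul_one]
  · rw [hRy, smul_mul_assoc, mul_assoc, hRRi', mul_one]
  · rw [mul_assoc, hRRi', mul_one]
  · rw [hRS, mul_assoc, hRRi', mul_one]
  · rw [hSx, smul_mul_assoc, mul_assoc, hSSi', mul_one]
  · rw [hSy, smul_mul_assoc, mul_assoc, hSSi', mul_one]
  · rw [mul_assoc, hRSi, ← mul_assoc, hSSi', one_mul]
  · rw [mul_assoc, hSSi', mul_one]
  all_goals {
    set P := zpowOf (arsρ K r s) (arsρinv K r s) p with hP
    set Q := zpowOf (arsσ K r s) (arsσinv K r s) (-q) with hQ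
    have key : (∀ a : Ars1 K r s, (P * Q) * a = a * (P * Q)) → r ^ p = s ^ q := by
      intro h
      have hPx : P * arsx K r s = r ^ p • (arsx K r s * P) :=
        zpowOf_conj hRx (hRix hr) p
      have hQx : Q * arsx K r s = s ^ (-q) • (arsx K r s * Q) :=
        zpowOf_conj hSx (hSix hs) (-q)
      have hcx : (P * Q) * arsx K r s = (r ^ p * s ^ (-q)) • (arsx K r s * (P * Q)) := by
        rw [mul_assoc, hQx, mul_smul_comm, ← mul_assoc, hPx, smul_mul_assoc, smul_smul,
          mul_assoc, mul_comm (s ^ (-q))]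
      have heq : arsx K r s * (P * Q) = (r ^ p * s ^ (-q)) • (arsx K r s * (P * Q)) := by
        conv_lhs => rw [← h (arsx K r s), hcx]
      set F := arsRep r s hr hs hrs2 with hF
      have hFx : F (arsx K r s) = Xop K := by
        rw [hF, arsx, arsRep, RingQuot.liftAlgHom_mkAlgHom_apply]
        simp [arsFree, arsGenOp]
      have hFρ : F (arsρ K r s) = Dop r := by
        rw [hF, arsρ, arsRep, RingQuot.liftAlgHom_mkAlgHom_apply]
        simp [arsFree, arsGenOp]
      have hFρi : F (arsρinv K r s) = Dop r⁻¹ := by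
        rw [hF, arsρinv, arsRep, RingQuot.liftAlgHom_mkAlgHom_apply]
        simp [arsFree, arsGenOp]
      have hFσ : F (arsσ K r s) = Dop s := by
        rw [hF, arsσ, arsRep, RingQuot.liftAlgHom_mkAlgHom_apply]
        simp [arsFree, arsGenOp]
      have hFσi : F (arsσinv K r s) = Dop s⁻¹ := by
        rw [hF, arsσinv, arsRep, RingQuot.liftAlgHom_mkAlgHom_apply]
        simp [arsFree, arsGenOp]
      have hFP : F P (eV K 0) = eV K 0 := by
        rw [hP]; unfold zpowOf; split
        · rw [map_pow, hFρ]; exact Dop_pow_e0 _ _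
        · rw [map_pow, hFρi]; exact Dop_pow_e0 _ _
      have hFQ : F Q (eV K 0) = eV K 0 := by
        rw [hQ]; unfold zpowOf; split
        · rw [map_pow, hFσ]; exact Dop_pow_e0 _ _
        · rw [map_pow, hFσi]; exact Dop_pow_e0 _ _
      have hFPQ : F (P * Q) (eV K 0) = eV K 0 := by
        rw [map_mul, Module.End.mul_apply, hFQ, hFP]
      have heval := congrArg (fun z => F z (eV K 0)) heq
      simp only [map_mul, map_smul, Module.End.mul_apply, LinearMap.smul_apply, hFQ, hFP,
        hFx, Xop_e] at heval
      have hone : (1 : K) = r ^ p * s ^ (-q) := by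
        have := congrArg (fun f : ℕ →₀ K => f 1) heval
        simpa [eV, Finsupp.smul_single] using this
      have hsq : (s : K) ^ q ≠ 0 := zpow_ne_zero q hs
      rw [zpow_neg] at hone
      field_simp at hone
      exact hone.symm
    constructor
    · intro h
      first
        | exact key h
        | exact hpq p q (key h)
    · intro h
      have hp0 : p = 0 ∧ q = 0 := by
        first
          | exact hpq p q h
          | exact h
      obtain ⟨hp0, hq0⟩ := hp0
      subst hp0; subst hq0
      intro a
      simp [hP, hQ, zpowOf_zero]
  }
end
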